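/- arXiv:2210.11332 — 2 statements merged into one kernel-verified Lean document; each statement's English description precedes it below -/
import Mathlib

section
/- For every integer k >= 0, the minimum number of crossings among all doubly-anchored open meanders lying in the genus-zero stratum Q(k, -1^{k+4}) is exactly k+1. -/
/-!
Combinatorial model of meanders.  The crossings of a meander with a horizontal
line are the points `0, 1, …` of a `Fin` type, read along the line.  The arcs of
the transversal curve lying above (resp. below) the line form a noncrossing
partial matching of the crossings, encoded as an involutive permutation whose
fixed points are the unmatched (free) points.  A complementary region of the
configuration directly below an arc having `c` directly nested children arcs and
`t` free (anchored) ends inside it is a `(2(c+t-1)+4)`-gon, hence corresponds to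
a zero of order `c+t-1`; the outer region on one side of the line with `T`
top-level arcs and `s` uncovered free ends is a `(2(T+s-2)+4)`-gon, a zero of
order `T+s-2`.  Zeros of order `0` are square regions (regular points) and zeros
of order `-1` are bigons (simple poles).
-/

namespace PaperMeanders

/-- `i` is the left endpoint of an arc of the partial matching `f`. -/
def IsArc {m : ℕ} (f : Equiv.Perm (Fin m)) (i : Fin m) : Prop := i < f i

/-- The arc with left endpoint `i` covers the point `p`. -/
def Covers {m : ℕ} (f : Equiv.Perm (Fin m)) (i p : Fin m) : Prop :=
  IsArc f i ∧ i < p ∧ p < f i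

/-- The arc with left endpoint `j` strictly contains the arc with left endpoint `i`. -/
def Nests {m : ℕ} (f : Equiv.Perm (Fin m)) (j i : Fin m) : Prop :=
  IsArc f j ∧ IsArc f i ∧ j < i ∧ f i < f j

/-- The arc `i` is nested directly inside the arc `j` (no arc strictly between). -/
def DirectChild {m : ℕ} (f : Equiv.Perm (Fin m)) (j i : Fin m) : Prop :=
  Nests f j i ∧ ∀ a, Nests f j a → ¬ Nests f a i

/-- `p` is a free (unmatched) point of the matching. -/
def IsFree {m : ℕ} (f : Equiv.Perm (Fin m)) (p : Fin m) : Prop := f p = p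

/-- The free end `p` lies in the region directly below the arc `i`,
i.e. `i` is the innermost arc covering `p`. -/
def FreeEndUnder {m : ℕ} (f : Equiv.Perm (Fin m)) (i p : Fin m) : Prop :=
  IsFree f p ∧ Covers f i p ∧ ∀ b, Covers f b p → ¬ Nests f i b

/-- The arc `i` is a top-level arc of the matching. -/
def IsTop {m : ℕ} (f : Equiv.Perm (Fin m)) (i : Fin m) : Prop :=
  IsArc f i ∧ ∀ j, ¬ Nests f j i

/-- The free end `p` is covered by no arc: it lies in the outer region. -/
def FreeEndOutside {m : ℕ} (f : Equiv.Perm (Fin m)) (p : Fin m) : Prop :=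
  IsFree f p ∧ ∀ b, ¬ Covers f b p

/-- The matching `f` is noncrossing (its arcs are pairwise disjoint or nested). -/
def Noncrossing {m : ℕ} (f : Equiv.Perm (Fin m)) : Prop :=
  ¬ ∃ i j : Fin m, i < j ∧ j < f i ∧ f i < f j

/-- The order of the zero carried by the complementary region directly below the
arc `i`. -/
noncomputable def arcOrder {m : ℕ} (f : Equiv.Perm (Fin m)) (i : Fin m) : ℤ :=
  (Nat.card {j // DirectChild f i j} : ℤ) + (Nat.card {p // FreeEndUnder f i p} : ℤ) - 1

/-- The order of the zero carried by the outer complementary region on this side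
of the line. -/
noncomputable def outerOrder {m : ℕ} (f : Equiv.Perm (Fin m)) : ℤ :=
  (Nat.card {i // IsTop f i} : ℤ) + (Nat.card {p // FreeEndOutside f p} : ℤ) - 2

/-- The multiset of the orders of the complementary regions below the arcs of `f`. -/
noncomputable def arcOrders {m : ℕ} (f : Equiv.Perm (Fin m)) : Multiset ℤ :=
  (Finset.univ.filter (fun i : Fin m => i < f i)).val.map (arcOrder f)

/-- The multiset of the orders of all complementary regions on one side of the line. -/
noncomputable def faceOrders {m : ℕ} (f : Equiv.Perm (Fin m)) : Multiset ℤ :=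
  outerOrder f ::ₘ arcOrders f

/-- A configuration whose complementary regions and anchor points carry the
multiset `orders` of zero orders lies in the genus-zero stratum `Q(K)`:
the nonzero orders agree with the nonzero entries of `K`, and every zero of
order `0` listed in `K` is realised by a square region (further unmarked square
regions are allowed). -/
def MatchesStratum (orders K : Multiset ℤ) : Prop :=
  orders.filter (· ≠ 0) = K.filter (· ≠ 0) ∧ K.count 0 ≤ orders.count 0

/-- The crossing carried by a half-edge position.  Cutting the sphere open along
the anchored horizontal line (an arc from the anchored end `P₁` through the
crossings `1, …, n` to the anchored end `P₂`) produces a disk; its boundary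
carries the `2n` transversal half-edges in the linear order
`n⁻, …, 1⁻, 1⁺, …, n⁺` (positions `0, …, 2n-1`), where `i⁻` and `i⁺` are the two
half-edges of the transversal at the crossing `i`. -/
def crossingOf (n : ℕ) (p : Fin (2 * n)) : ℕ :=
  if (p : ℕ) < n then n - 1 - (p : ℕ) else (p : ℕ) - n

/-- A doubly-anchored open meander: a horizontal line anchored at two punctures
together with a transversal arc anchored at two punctures, crossing the line
transversally at `n` points and never passing around the ends of the line.  In
the cut-open (disk) picture the transversal arcs form a noncrossing partial
matching of the `2n` half-edge positions with exactly two free (anchored) ends,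
no arc joining the lower block to the upper block (arcs stay on one side of the
line), gluing up into a single arc through all the crossings. -/
structure DoublyAnchoredOpenMeander where
  /-- the number of crossings -/
  n : ℕ
  /-- the noncrossing matching of the half-edge positions by the transversal arcs -/
  arcs : Equiv.Perm (Fin (2 * n))
  arcs_invol : ∀ i, arcs (arcs i) = i
  arcs_noncrossing : Noncrossing arcs
  /-- each arc stays in the upper or in the lower half-plane: no arc passes
  around an end of the horizontal line -/
  no_wrap : ∀ i : Fin (2 * n), (i : ℕ) < n ↔ ((arcs i : Fin (2 * n)) : ℕ) < n
  /-- the transversal arc has exactly two anchored ends -/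
  two_free_ends : Nat.card {p // arcs p = p} = 2
  /-- the arcs glue up into a single transversal arc through all the crossings -/
  single_arc : ∀ i j : Fin (2 * n),
    Relation.ReflTransGen
      (fun a b => (arcs a = b ∧ a ≠ b) ∨ crossingOf n a = crossingOf n b) i j

/-- The number of crossings of a doubly-anchored open meander. -/
def DoublyAnchoredOpenMeander.crossings (M : DoublyAnchoredOpenMeander) : ℕ := M.n

/-- The multiset of orders of the zeros carried by the complementary regions of a
doubly-anchored open meander, together with one simple pole for each of the four
anchor points (valence-one vertices). -/
noncomputable def DoublyAnchoredOpenMeander.orders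
    (M : DoublyAnchoredOpenMeander) : Multiset ℤ :=
  faceOrders M.arcs + Multiset.replicate 4 (-1)

/-- The doubly-anchored open meander lies in the genus-zero stratum `Q(K)`. -/
def DoublyAnchoredOpenMeander.InStratum (M : DoublyAnchoredOpenMeander)
    (K : Multiset ℤ) : Prop :=
  MatchesStratum M.orders K


/-! ### The snake meander realising the minimum -/

def snakeF (n p : ℕ) : ℕ :=
  if p < n then
    if p = n - 1 then p
    else if (n - 1 - p) % 2 = 1 then (if p = 0 then p else p - 1)
    else p + 1
  else
    if p - n = n - 1 then (if (p - n) % 2 = 0 then p else p - 1)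
    else if (p - n) % 2 = 0 then p + 1
    else p - 1

lemma snakeF_tri (n p : ℕ) (h : p < 2 * n) :
    (snakeF n p = p ∧ (p = n - 1 ∨ (n % 2 = 0 ∧ p = 0) ∨ (n % 2 = 1 ∧ p = 2 * n - 1)))
    ∨ (snakeF n p = p + 1 ∧ p + 1 < 2 * n ∧ (p < n ↔ p + 1 < n)
        ∧ ¬(p = n - 1 ∨ (n % 2 = 0 ∧ p = 0) ∨ (n % 2 = 1 ∧ p = 2 * n - 1))
        ∧ ((p < n ∧ (n - 1 - p) % 2 = 0) ∨ (n ≤ p ∧ (p - n) % 2 = 0)))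
    ∨ (snakeF n p = p - 1 ∧ 0 < p ∧ (p < n ↔ p - 1 < n)
        ∧ ¬(p = n - 1 ∨ (n % 2 = 0 ∧ p = 0) ∨ (n % 2 = 1 ∧ p = 2 * n - 1))
        ∧ ((p < n ∧ (n - 1 - p) % 2 = 1) ∨ (n ≤ p ∧ (p - n) % 2 = 1))) := by
  unfold snakeF; split_ifs <;> omega

lemma snakeF_lt (n p : ℕ) (h : p < 2 * n) : snakeF n p < 2 * n := by
  rcases snakeF_tri n p h with ⟨h1, _⟩ | ⟨h1, h2⟩ | ⟨h1, _⟩ <;> omega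

attribute [irreducible] snakeF

lemma snakeF_invol (n p : ℕ) (h : p < 2 * n) : snakeF n (snakeF n p) = p := by
  have h1 := snakeF_tri n p h
  obtain ⟨q, hq⟩ : ∃ q, snakeF n p = q := ⟨_, rfl⟩
  rw [hq] at h1 ⊢
  have h2 := snakeF_tri n q (hq ▸ snakeF_lt n p h)
  omega

lemma snakeF_block (n p : ℕ) (h : p < 2 * n) : p < n ↔ snakeF n p < n := by
  rcases snakeF_tri n p h with ⟨h1, h2⟩ | ⟨h1, h2⟩ | ⟨h1, h2⟩ <;> omega

lemma snakeF_adj (n p : ℕ) (h : p < 2 * n) :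
    snakeF n p = p - 1 ∨ snakeF n p = p ∨ snakeF n p = p + 1 := by
  rcases snakeF_tri n p h with ⟨h1, _⟩ | ⟨h1, _⟩ | ⟨h1, _⟩ <;> omega

lemma snakeF_fix (n p : ℕ) (h : p < 2 * n) :
    snakeF n p = p ↔ (p = n - 1 ∨ (n % 2 = 0 ∧ p = 0) ∨ (n % 2 = 1 ∧ p = 2 * n - 1)) := by
  rcases snakeF_tri n p h with ⟨h1, h2⟩ | ⟨h1, h2⟩ | ⟨h1, h2⟩ <;>
    constructor <;> intro hh <;> omega


/-- The snake matching as a permutation of `Fin (2*n)`. -/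
def snakeEquiv (n : ℕ) : Equiv.Perm (Fin (2 * n)) :=
  Function.Involutive.toPerm (fun p => ⟨snakeF n p.val, snakeF_lt n p.val p.isLt⟩)
    (fun p => Fin.ext (snakeF_invol n p.val p.isLt))

@[simp] lemma snakeEquiv_apply (n : ℕ) (p : Fin (2 * n)) :
    ((snakeEquiv n p : Fin (2 * n)) : ℕ) = snakeF n p.val := rfl

lemma snake_step {n : ℕ} (i : Fin (2 * n)) (h : i < snakeEquiv n i) :
    ((snakeEquiv n i : Fin (2 * n)) : ℕ) = (i : ℕ) + 1 := by
  have hadj := snakeF_adj n i.val i.isLt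
  have hlt : (i : ℕ) < snakeF n i.val := h
  simpa using by omega

lemma snake_not_nests {n : ℕ} (j i : Fin (2 * n)) : ¬ Nests (snakeEquiv n) j i := by
  rintro ⟨hj, hi, hji, hfij⟩
  have h1 := snake_step j hj
  have h2 := snake_step i hi
  have h3 : (j : ℕ) < (i : ℕ) := hji
  have h4 : ((snakeEquiv n i : Fin (2 * n)) : ℕ) < ((snakeEquiv n j : Fin (2 * n)) : ℕ) := hfij
  omega

lemma snake_not_covers {n : ℕ} (i p : Fin (2 * n)) : ¬ Covers (snakeEquiv n) i p := by
  rintro ⟨hi, hip, hpfi⟩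
  have h1 := snake_step i hi
  have h2 : (i : ℕ) < (p : ℕ) := hip
  have h3 : (p : ℕ) < ((snakeEquiv n i : Fin (2 * n)) : ℕ) := hpfi
  omega

lemma snake_noncrossing (n : ℕ) : Noncrossing (snakeEquiv n) := by
  rintro ⟨i, j, hij, hjfi, hfifj⟩
  have hi : i < snakeEquiv n i := lt_trans hij hjfi
  have h1 := snake_step i hi
  have h2 : (i : ℕ) < (j : ℕ) := hij
  have h3 : (j : ℕ) < ((snakeEquiv n i : Fin (2 * n)) : ℕ) := hjfi
  omega

/-- Number of arcs of an involution of `Fin (2*n)` with exactly two fixed points. -/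
lemma card_isArc {n : ℕ} (f : Equiv.Perm (Fin (2 * n)))
    (hinv : ∀ i, f (f i) = i)
    (hfix : Nat.card {p // f p = p} = 2) :
    (Finset.univ.filter (fun i : Fin (2 * n) => i < f i)).card = n - 1 := by
  classical
  have hfix' : (Finset.univ.filter (fun p : Fin (2 * n) => f p = p)).card = 2 := by
    rw [Nat.card_eq_fintype_card, Fintype.card_subtype] at hfix
    exact hfix
  have hAB : (Finset.univ.filter (fun i : Fin (2 * n) => i < f i)).card
      = (Finset.univ.filter (fun i : Fin (2 * n) => f i < i)).card := by
    apply Finset.card_bij (fun i _ => f i)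
    · intro a ha
      simp only [Finset.mem_filter, Finset.mem_univ, true_and] at ha ⊢
      rw [hinv]; exact ha
    · intro a _ b _ hab
      have := congrArg f hab
      rwa [hinv, hinv] at this
    · intro b hb
      simp only [Finset.mem_filter, Finset.mem_univ, true_and] at hb
      exact ⟨f b, by simp only [Finset.mem_filter, Finset.mem_univ, true_and, hinv]; exact hb,
        hinv b⟩
  have hsplit := Finset.card_filter_add_card_filter_not
      (s := (Finset.univ : Finset (Fin (2 * n)))) (p := fun i => i < f i)
  have hne : Finset.univ.filter (fun i : Fin (2 * n) => ¬ i < f i)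
      = Finset.univ.filter (fun i : Fin (2 * n) => f i < i)
        ∪ Finset.univ.filter (fun i : Fin (2 * n) => f i = i) := by
    ext x
    simp only [Finset.mem_filter, Finset.mem_univ, true_and, Finset.mem_union, not_lt]
    constructor
    · intro hx
      rcases lt_or_eq_of_le hx with h | h
      · exact Or.inl h
      · exact Or.inr h
    · rintro (h | h)
      · exact le_of_lt h
      · exact le_of_eq h
  have hdisj : Disjoint (Finset.univ.filter (fun i : Fin (2 * n) => f i < i))
      (Finset.univ.filter (fun i : Fin (2 * n) => f i = i)) := by
    rw [Finset.disjoint_left]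
    intro a ha hb
    simp only [Finset.mem_filter, Finset.mem_univ, true_and] at ha hb
    exact absurd hb (ne_of_lt ha)
  have hcard2n : (Finset.univ : Finset (Fin (2 * n))).card = 2 * n := by simp
  rw [hne, Finset.card_union_of_disjoint hdisj, hfix', hcard2n, ← hAB] at hsplit
  omega

lemma two_le_2n {n : ℕ} (f : Equiv.Perm (Fin (2 * n)))
    (hfix : Nat.card {p // f p = p} = 2) : 0 < n := by
  classical
  have h := Nat.card_le_card_of_injective (fun x : {p : Fin (2 * n) // f p = p} => x.val)
    Subtype.val_injective
  rw [hfix, Nat.card_eq_fintype_card, Fintype.card_fin] at h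
  omega

lemma snake_fix_card {n : ℕ} (hn : 0 < n) :
    Nat.card {p : Fin (2 * n) // snakeEquiv n p = p} = 2 := by
  classical
  rw [Nat.card_eq_fintype_card, Fintype.card_subtype]
  have key : ∀ p : Fin (2 * n), snakeEquiv n p = p ↔
      ((p : ℕ) = n - 1 ∨ (n % 2 = 0 ∧ (p : ℕ) = 0) ∨ (n % 2 = 1 ∧ (p : ℕ) = 2 * n - 1)) :=
    fun p => Iff.trans (Fin.ext_iff) (snakeF_fix n p.val p.isLt)
  rcases Nat.even_or_odd n with he | ho
  · have h2 : n % 2 = 0 := Nat.even_iff.mp he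
    have : Finset.univ.filter (fun p : Fin (2 * n) => snakeEquiv n p = p)
        = {⟨n - 1, by omega⟩, ⟨0, by omega⟩} := by
      ext p
      simp only [Finset.mem_filter, Finset.mem_univ, true_and, key, Finset.mem_insert,
        Finset.mem_singleton, Fin.ext_iff]
      omega
    rw [this, Finset.card_pair]
    simp only [ne_eq, Fin.ext_iff]
    omega
  · have h2 : n % 2 = 1 := Nat.odd_iff.mp ho
    have : Finset.univ.filter (fun p : Fin (2 * n) => snakeEquiv n p = p)
        = {⟨n - 1, by omega⟩, ⟨2 * n - 1, by omega⟩} := by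
      ext p
      simp only [Finset.mem_filter, Finset.mem_univ, true_and, key, Finset.mem_insert,
        Finset.mem_singleton, Fin.ext_iff]
      omega
    rw [this, Finset.card_pair]
    simp only [ne_eq, Fin.ext_iff]
    omega

section SingleArc

variable {n : ℕ}

/-- The adjacency relation underlying `single_arc` for the snake. -/
def snakeRel (n : ℕ) (a b : Fin (2 * n)) : Prop :=
  (snakeEquiv n a = b ∧ a ≠ b) ∨ crossingOf n a = crossingOf n b

lemma snakeRel_symm : Symmetric (snakeRel n) := by
  rintro a b (⟨h1, h2⟩ | h)
  · left
    constructor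
    · rw [← h1]; exact Fin.ext (snakeF_invol n a.val a.isLt)
    · exact h2.symm
  · right; exact h.symm

lemma snake_conn_below (hn : 0 < n) :
    ∀ c : ℕ, c < n → Relation.ReflTransGen (snakeRel n)
      ⟨n - 1 - c, by omega⟩ ⟨n - 1, by omega⟩ := by
  intro c
  induction c with
  | zero => intro _; exact Relation.ReflTransGen.refl
  | succ c ih =>
    intro hc
    have hcn : c < n := by omega
    refine Relation.ReflTransGen.trans ?_ (ih hcn)
    rcases Nat.even_or_odd c with he | ho
    · -- even crossing: go via the upper arc
      have h2 : c % 2 = 0 := Nat.even_iff.mp he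
      have e1 : snakeRel n ⟨n - 1 - (c + 1), by omega⟩ ⟨n + (c + 1), by omega⟩ := by
        right
        unfold crossingOf
        simp only
        rw [if_pos (by omega : n - 1 - (c + 1) < n), if_neg (by omega : ¬ n + (c + 1) < n)]
        omega
      have e2 : snakeRel n ⟨n + (c + 1), by omega⟩ ⟨n + c, by omega⟩ := by
        left
        constructor
        · apply Fin.ext
          show snakeF n (n + (c + 1)) = n + c
          unfold snakeF
          split_ifs <;> omega
        · simp only [ne_eq, Fin.ext_iff]; omega
      have e3 : snakeRel n ⟨n + c, by omega⟩ ⟨n - 1 - c, by omega⟩ := by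
        right
        unfold crossingOf
        simp only
        rw [if_neg (by omega : ¬ n + c < n), if_pos (by omega : n - 1 - c < n)]
        omega
      exact Relation.ReflTransGen.head e1 (Relation.ReflTransGen.head e2
        (Relation.ReflTransGen.single e3))
    · -- odd crossing: direct lower arc
      have h2 : c % 2 = 1 := Nat.odd_iff.mp ho
      have e1 : snakeRel n ⟨n - 1 - (c + 1), by omega⟩ ⟨n - 1 - c, by omega⟩ := by
        left
        constructor
        · apply Fin.ext
          show snakeF n (n - 1 - (c + 1)) = n - 1 - c
          unfold snakeF
          split_ifs <;> omega
        · simp only [ne_eq, Fin.ext_iff]; omega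
      exact Relation.ReflTransGen.single e1

lemma snake_conn (hn : 0 < n) (i : Fin (2 * n)) :
    Relation.ReflTransGen (snakeRel n) i ⟨n - 1, by omega⟩ := by
  by_cases hi : (i : ℕ) < n
  · have : i = (⟨n - 1 - (n - 1 - (i : ℕ)), by omega⟩ : Fin (2 * n)) := by
      apply Fin.ext; simp only; omega
    rw [this]
    exact snake_conn_below hn (n - 1 - (i : ℕ)) (by omega)
  · have e : snakeRel n i ⟨n - 1 - ((i : ℕ) - n), by omega⟩ := by
      right
      unfold crossingOf
      rw [if_neg hi, if_pos (by omega : (n - 1 - ((i : ℕ) - n) : ℕ) < n)]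
      show ((i : ℕ) - n) = n - 1 - (n - 1 - ((i : ℕ) - n))
      have := i.isLt
      omega
    exact Relation.ReflTransGen.head e
      (snake_conn_below hn ((i : ℕ) - n) (by have := i.isLt; omega))

lemma snake_single (hn : 0 < n) (i j : Fin (2 * n)) :
    Relation.ReflTransGen (snakeRel n) i j :=
  Relation.ReflTransGen.trans (snake_conn hn i)
    (haveI : Std.Symm (snakeRel n) := ⟨snakeRel_symm⟩; Std.Symm.symm _ _ (snake_conn hn j))

end SingleArc

/-- The snake meander with `n` crossings. -/
def snakeMeander (n : ℕ) (hn : 0 < n) : DoublyAnchoredOpenMeander where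
  n := n
  arcs := snakeEquiv n
  arcs_invol := fun i => Fin.ext (snakeF_invol n i.val i.isLt)
  arcs_noncrossing := snake_noncrossing n
  no_wrap := fun i => snakeF_block n i.val i.isLt
  two_free_ends := snake_fix_card hn
  single_arc := snake_single hn

lemma snake_arcOrder {n : ℕ} (i : Fin (2 * n)) : arcOrder (snakeEquiv n) i = -1 := by
  have h1 : IsEmpty {j // DirectChild (snakeEquiv n) i j} :=
    ⟨fun ⟨j, hj⟩ => snake_not_nests i j hj.1⟩
  have h2 : IsEmpty {p // FreeEndUnder (snakeEquiv n) i p} :=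
    ⟨fun ⟨p, hp⟩ => snake_not_covers i p hp.2.1⟩
  unfold arcOrder
  rw [Nat.card_of_isEmpty, Nat.card_of_isEmpty]
  simp

lemma snake_arcOrders {n : ℕ} (hn : 0 < n) :
    arcOrders (snakeEquiv n) = Multiset.replicate (n - 1) (-1) := by
  classical
  unfold arcOrders
  rw [Multiset.map_congr rfl (fun i _ => snake_arcOrder i), Multiset.map_const']
  rw [show Multiset.card (Finset.univ.filter
      (fun i : Fin (2 * n) => i < snakeEquiv n i)).val
    = (Finset.univ.filter (fun i : Fin (2 * n) => i < snakeEquiv n i)).card from rfl]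
  rw [card_isArc (snakeEquiv n) (fun i => Fin.ext (snakeF_invol n i.val i.isLt))
    (snake_fix_card hn)]

lemma snake_outerOrder {n : ℕ} (hn : 0 < n) :
    outerOrder (snakeEquiv n) = ((n : ℤ) - 1) := by
  classical
  have h1 : Nat.card {i // IsTop (snakeEquiv n) i}
      = Nat.card {i : Fin (2 * n) // i < snakeEquiv n i} := by
    apply Nat.card_congr
    apply Equiv.subtypeEquivRight
    intro i
    constructor
    · exact fun h => h.1
    · exact fun h => ⟨h, fun j => snake_not_nests j i⟩
  have h2 : Nat.card {p // FreeEndOutside (snakeEquiv n) p}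
      = Nat.card {p : Fin (2 * n) // snakeEquiv n p = p} := by
    apply Nat.card_congr
    apply Equiv.subtypeEquivRight
    intro p
    constructor
    · exact fun h => h.1
    · exact fun h => ⟨h, fun b => snake_not_covers b p⟩
  have h3 : Nat.card {i : Fin (2 * n) // i < snakeEquiv n i} = n - 1 := by
    rw [Nat.card_eq_fintype_card, Fintype.card_subtype]
    exact card_isArc (snakeEquiv n) (fun i => Fin.ext (snakeF_invol n i.val i.isLt))
      (snake_fix_card hn)
  unfold outerOrder
  rw [h1, h2, h3, snake_fix_card hn]
  have : ((n - 1 : ℕ) : ℤ) = (n : ℤ) - 1 := by omega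
  rw [this]; ring

lemma snake_orders {n : ℕ} (hn : 0 < n) :
    (snakeMeander n hn).orders
      = ((n : ℤ) - 1) ::ₘ Multiset.replicate ((n - 1) + 4) (-1) := by
  show faceOrders (snakeEquiv n) + Multiset.replicate 4 (-1) = _
  unfold faceOrders
  rw [snake_arcOrders hn, snake_outerOrder hn, Multiset.cons_add, Multiset.replicate_add]

/-- **Proposition 4.4.**  For every integer `k ≥ 0`, the minimum number of
crossings among all doubly-anchored open meanders lying in the genus-zero
stratum `Q(k, -1^{k+4})` is exactly `k + 1`. -/
theorem min_crossings_doublyAnchoredOpenMeander (k : ℕ) :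
    IsLeast {c : ℕ | ∃ M : DoublyAnchoredOpenMeander,
        M.InStratum ((k : ℤ) ::ₘ Multiset.replicate (k + 4) (-1 : ℤ)) ∧
        M.crossings = c}
      (k + 1) := by
  constructor
  · -- the snake meander with `k+1` crossings realises the stratum
    refine ⟨snakeMeander (k + 1) (Nat.succ_pos k), ?_, rfl⟩
    have horders : (snakeMeander (k + 1) (Nat.succ_pos k)).orders
        = (k : ℤ) ::ₘ Multiset.replicate (k + 4) (-1) := by
      rw [snake_orders]
      congr 1
      push_cast
      ring
    exact ⟨by rw [horders], le_of_eq (by rw [horders])⟩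
  · -- lower bound
    rintro c ⟨M, hM, rfl⟩
    show k + 1 ≤ M.n
    have hn : 0 < M.n := two_le_2n M.arcs M.two_free_ends
    rcases Nat.eq_zero_or_pos k with hk | hk
    · omega
    have h1 : Multiset.card (Multiset.filter (· ≠ 0) M.orders)
        = Multiset.card (Multiset.filter (· ≠ (0 : ℤ))
            ((k : ℤ) ::ₘ Multiset.replicate (k + 4) (-1))) :=
      congrArg Multiset.card hM.1
    have hrep : (Multiset.replicate 4 (-1 : ℤ)).filter (· ≠ 0)
        = Multiset.replicate 4 (-1 : ℤ) :=
      Multiset.filter_eq_self.mpr (fun a ha => by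
        rw [Multiset.eq_of_mem_replicate ha]; decide)
    have hface : Multiset.card (faceOrders M.arcs) = M.n := by
      unfold faceOrders arcOrders
      rw [Multiset.card_cons, Multiset.card_map]
      have hc := card_isArc M.arcs M.arcs_invol M.two_free_ends
      rw [show Multiset.card (Finset.univ.filter
            (fun i : Fin (2 * M.n) => i < M.arcs i)).val
          = (Finset.univ.filter (fun i : Fin (2 * M.n) => i < M.arcs i)).card from rfl, hc]
      omega
    have hle : Multiset.card (Multiset.filter (· ≠ 0) M.orders) ≤ M.n + 4 := by
      show Multiset.card (Multiset.filter (· ≠ 0)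
        (faceOrders M.arcs + Multiset.replicate 4 (-1))) ≤ _
      rw [Multiset.filter_add, Multiset.card_add, hrep, Multiset.card_replicate]
      have := Multiset.card_le_card (Multiset.filter_le (· ≠ (0 : ℤ)) (faceOrders M.arcs))
      omega
    have hK : Multiset.card (Multiset.filter (· ≠ (0 : ℤ))
        ((k : ℤ) ::ₘ Multiset.replicate (k + 4) (-1))) = k + 5 := by
      have hKs : Multiset.filter (· ≠ (0 : ℤ)) ((k : ℤ) ::ₘ Multiset.replicate (k + 4) (-1))
          = (k : ℤ) ::ₘ Multiset.replicate (k + 4) (-1) := by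
        apply Multiset.filter_eq_self.mpr
        intro a ha
        rcases Multiset.mem_cons.mp ha with h | h
        · rw [h]
          exact_mod_cast (by omega : k ≠ 0)
        · rw [Multiset.eq_of_mem_replicate h]; decide
      rw [hKs, Multiset.card_cons, Multiset.card_replicate]
    omega

end PaperMeanders
end

section
/- For all integers k_1 >= k_2 >= 0, the minimum number of crossings among all doubly-anchored open semi-meanders lying in the genus-zero stratum Q(k_1, k_2, -1^{k_1+k_2+4}) is exactly k_1 + k_2 + 2. -/
set_option maxHeartbeats 1000000


/-!
Combinatorial model of meanders.  The crossings of a meander with a horizontal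
line are the points `0, 1, …` of a `Fin` type, read along the line.  The arcs of
the transversal curve lying above (resp. below) the line form a noncrossing
partial matching of the crossings, encoded as an involutive permutation whose
fixed points are the unmatched (free) points.  A complementary region of the
configuration directly below an arc having `c` directly nested children arcs and
`t` free (anchored) ends inside it is a `(2(c+t-1)+4)`-gon, hence corresponds to
a zero of order `c+t-1`; the outer region on one side of the line with `T`
top-level arcs and `s` uncovered free ends is a `(2(T+s-2)+4)`-gon, a zero of
order `T+s-2`.  Zeros of order `0` are square regions (regular points) and zeros
of order `-1` are bigons (simple poles).
-/

namespace PaperMeanders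

/-- A doubly-anchored open semi-meander: a horizontal ray anchored at its finite
end-point and at infinity, together with a transversal arc anchored at two
punctures, crossing the ray transversally at `n` points and allowed to pass
around the end-point of the ray.  In the cut-open (disk) picture the transversal
arcs form a noncrossing partial matching of the `2n` half-edge positions with
exactly two free (anchored) ends, gluing up into a single arc through all the
crossings. -/
structure DoublyAnchoredOpenSemiMeander where
  /-- the number of crossings -/
  n : ℕ
  /-- the noncrossing matching of the half-edge positions by the transversal arcs -/
  arcs : Equiv.Perm (Fin (2 * n))
  arcs_invol : ∀ i, arcs (arcs i) = i
  arcs_noncrossing : Noncrossing arcs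
  /-- the transversal arc has exactly two anchored ends -/
  two_free_ends : Nat.card {p // arcs p = p} = 2
  /-- the arcs glue up into a single transversal arc through all the crossings -/
  single_arc : ∀ i j : Fin (2 * n),
    Relation.ReflTransGen
      (fun a b => (arcs a = b ∧ a ≠ b) ∨ crossingOf n a = crossingOf n b) i j

/-- The number of crossings of a doubly-anchored open semi-meander. -/
def DoublyAnchoredOpenSemiMeander.crossings (M : DoublyAnchoredOpenSemiMeander) : ℕ := M.n

/-- The multiset of orders of the zeros carried by the complementary regions of a
doubly-anchored open semi-meander, together with one simple pole for each of the
four anchor points (valence-one vertices). -/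
noncomputable def DoublyAnchoredOpenSemiMeander.orders
    (M : DoublyAnchoredOpenSemiMeander) : Multiset ℤ :=
  faceOrders M.arcs + Multiset.replicate 4 (-1)

/-- The doubly-anchored open semi-meander lies in the genus-zero stratum `Q(K)`. -/
def DoublyAnchoredOpenSemiMeander.InStratum (M : DoublyAnchoredOpenSemiMeander)
    (K : Multiset ℤ) : Prop :=
  MatchesStratum M.orders K

namespace Con

def nn (k2 a b c : ℕ) : ℕ := k2+a+b+c+3
def mm (k2 a b c : ℕ) : ℕ := 2 * nn k2 a b c
def LL (k2 : ℕ) : ℕ := 2*k2+2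
def q1 (k2 a : ℕ) : ℕ := 2*k2+3+2*a
def q2 (k2 a b : ℕ) : ℕ := 2*k2+4+2*a+2*b

def Bl (k2 a b c x : ℕ) : Prop :=
  (x % 2 = 0 ∧ x < LL k2) ∨ (x % 2 = 1 ∧ LL k2 < x ∧ x < q1 k2 a) ∨
  (x % 2 = 0 ∧ q1 k2 a < x ∧ x < q2 k2 a b) ∨
  (x % 2 = 1 ∧ q2 k2 a b < x ∧ x < mm k2 a b c - 2)
def Br (k2 a b c x : ℕ) : Prop :=
  (x % 2 = 1 ∧ x < LL k2) ∨ (x % 2 = 0 ∧ LL k2 < x ∧ x < q1 k2 a) ∨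
  (x % 2 = 1 ∧ q1 k2 a < x ∧ x < q2 k2 a b) ∨
  (x % 2 = 0 ∧ q2 k2 a b < x ∧ x ≤ mm k2 a b c - 2)

instance Bl.decidable {k2 a b c x : ℕ} : Decidable (Bl k2 a b c x) := by
  unfold Bl; exact inferInstance

def fn (k2 a b c x : ℕ) : ℕ :=
  if x = LL k2 then mm k2 a b c - 1
  else if x = mm k2 a b c - 1 then LL k2
  else if x = q1 k2 a ∨ x = q2 k2 a b then x
  else if x < LL k2 ∨ (q1 k2 a < x ∧ x < q2 k2 a b) then (if x % 2 = 0 then x+1 else x-1)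
  else if x % 2 = 1 then x+1 else x-1

variable {k2 a b c : ℕ}

lemma fn_spec {x : ℕ} (hx : x < mm k2 a b c) :
    (x = LL k2 ∧ fn k2 a b c x = mm k2 a b c - 1) ∨
    (x = mm k2 a b c - 1 ∧ fn k2 a b c x = LL k2) ∨
    ((x = q1 k2 a ∨ x = q2 k2 a b) ∧ fn k2 a b c x = x) ∨
    (Bl k2 a b c x ∧ fn k2 a b c x = x + 1) ∨
    (Br k2 a b c x ∧ fn k2 a b c x = x - 1) := by
  unfold fn
  split_ifs with h1 h2 h3 h4 h5
  · exact Or.inl ⟨h1, rfl⟩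
  · exact Or.inr (Or.inl ⟨h2, rfl⟩)
  · exact Or.inr (Or.inr (Or.inl ⟨h3, rfl⟩))
  · refine Or.inr (Or.inr (Or.inr (Or.inl ⟨?_, rfl⟩)))
    unfold Bl mm nn LL q1 q2 at *; omega
  · refine Or.inr (Or.inr (Or.inr (Or.inr ⟨?_, rfl⟩)))
    unfold Br mm nn LL q1 q2 at *; omega
  · refine Or.inr (Or.inr (Or.inr (Or.inl ⟨?_, rfl⟩)))
    unfold Bl mm nn LL q1 q2 at *; omega
  · refine Or.inr (Or.inr (Or.inr (Or.inr ⟨?_, rfl⟩)))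
    unfold Br mm nn LL q1 q2 at *; omega

lemma fn_lt {x : ℕ} (hx : x < mm k2 a b c) : fn k2 a b c x < mm k2 a b c := by
  rcases fn_spec hx with h|h|h|h|h <;>
    simp only [Bl, Br, mm, nn, LL, q1, q2] at * <;> omega

lemma fn_invol {x : ℕ} (hx : x < mm k2 a b c) : fn k2 a b c (fn k2 a b c x) = x := by
  rcases fn_spec hx with h|h|h|h|h <;>
    rcases fn_spec (fn_lt hx) with h'|h'|h'|h'|h' <;>
    simp only [Bl, Br, mm, nn, LL, q1, q2] at * <;> omega

/-- the permutation -/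
def FF (k2 a b c : ℕ) : Equiv.Perm (Fin (2 * nn k2 a b c)) :=
  Function.Involutive.toPerm
    (fun x => ⟨fn k2 a b c x.1, fn_lt x.2⟩)
    (fun x => Fin.ext (fn_invol x.2))

lemma FF_apply (x : Fin (2 * nn k2 a b c)) : (FF k2 a b c x : ℕ) = fn k2 a b c x.1 := rfl

lemma FF_invol (x : Fin (2 * nn k2 a b c)) : FF k2 a b c (FF k2 a b c x) = x :=
  Fin.ext (fn_invol x.2)

-- characterizations
lemma isArc_iff (x : Fin (2 * nn k2 a b c)) :
    IsArc (FF k2 a b c) x ↔ ((x : ℕ) = LL k2 ∨ Bl k2 a b c x) := by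
  have hx := x.2
  have hs := fn_spec (k2 := k2) (a := a) (b := b) (c := c) (x := x.1) x.2
  rw [IsArc, Fin.lt_def, FF_apply]
  constructor
  · intro hlt
    rcases hs with h|h|h|h|h <;>
      simp only [Bl, Br, mm, nn, LL, q1, q2] at * <;> omega
  · intro hor
    rcases hs with h|h|h|h|h <;>
      simp only [Bl, Br, mm, nn, LL, q1, q2] at * <;> omega

lemma isFree_iff (x : Fin (2 * nn k2 a b c)) :
    IsFree (FF k2 a b c) x ↔ ((x : ℕ) = q1 k2 a ∨ (x : ℕ) = q2 k2 a b) := by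
  have hs := fn_spec (k2 := k2) (a := a) (b := b) (c := c) (x := x.1) x.2
  have hx := x.2
  rw [IsFree, Fin.ext_iff, FF_apply]
  constructor <;> intro h <;>
    rcases hs with h'|h'|h'|h'|h' <;>
      simp only [Bl, Br, mm, nn, LL, q1, q2] at * <;> omega

lemma covers_iff (i p : Fin (2 * nn k2 a b c)) :
    Covers (FF k2 a b c) i p ↔
      ((i : ℕ) = LL k2 ∧ LL k2 < (p : ℕ) ∧ (p : ℕ) < mm k2 a b c - 1) := by
  have hsi := fn_spec (k2 := k2) (a := a) (b := b) (c := c) (x := i.1) i.2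
  have hi := i.2; have hp := p.2
  rw [Covers, IsArc, Fin.lt_def, Fin.lt_def, Fin.lt_def, FF_apply]
  constructor <;> intro h <;>
    rcases hsi with h'|h'|h'|h'|h' <;>
      simp only [Bl, Br, mm, nn, LL, q1, q2] at * <;> omega

lemma nests_iff (j i : Fin (2 * nn k2 a b c)) :
    Nests (FF k2 a b c) j i ↔
      ((j : ℕ) = LL k2 ∧ Bl k2 a b c i ∧ LL k2 < (i : ℕ)) := by
  have hsi := fn_spec (k2 := k2) (a := a) (b := b) (c := c) (x := i.1) i.2
  have hsj := fn_spec (k2 := k2) (a := a) (b := b) (c := c) (x := j.1) j.2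
  have hi := i.2; have hj := j.2
  rw [Nests, IsArc, IsArc, Fin.lt_def, Fin.lt_def, Fin.lt_def, Fin.lt_def,
    FF_apply, FF_apply]
  constructor <;> intro h <;>
    rcases hsi with h'|h'|h'|h'|h' <;> rcases hsj with h''|h''|h''|h''|h'' <;>
      simp only [Bl, Br, mm, nn, LL, q1, q2] at * <;> omega

lemma bl_ne_LL {x : ℕ} (h : Bl k2 a b c x) : x ≠ LL k2 := by
  simp only [Bl, mm, nn, LL, q1, q2] at *; omega

lemma directChild_iff (j i : Fin (2 * nn k2 a b c)) :
    DirectChild (FF k2 a b c) j i ↔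
      ((j : ℕ) = LL k2 ∧ Bl k2 a b c i ∧ LL k2 < (i : ℕ)) := by
  rw [DirectChild, nests_iff]
  constructor
  · exact fun h => h.1
  · intro h
    refine ⟨h, fun e he hei => ?_⟩
    rw [nests_iff] at he
    rw [nests_iff] at hei
    exact absurd hei.1 (bl_ne_LL he.2.1)

lemma freeEndUnder_iff (i p : Fin (2 * nn k2 a b c)) :
    FreeEndUnder (FF k2 a b c) i p ↔
      ((i : ℕ) = LL k2 ∧ ((p : ℕ) = q1 k2 a ∨ (p : ℕ) = q2 k2 a b)) := by
  rw [FreeEndUnder, isFree_iff, covers_iff]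
  constructor
  · intro h
    exact ⟨h.2.1.1, h.1⟩
  · intro h
    have hq : LL k2 < (p:ℕ) ∧ (p:ℕ) < mm k2 a b c - 1 := by
      simp only [Bl, Br, mm, nn, LL, q1, q2] at * ; omega
    refine ⟨h.2, ⟨h.1, hq.1, hq.2⟩, fun e he hne => ?_⟩
    rw [covers_iff] at he
    rw [nests_iff] at hne
    exact bl_ne_LL hne.2.1 he.1

lemma isTop_iff (i : Fin (2 * nn k2 a b c)) :
    IsTop (FF k2 a b c) i ↔
      ((i : ℕ) = LL k2 ∨ (Bl k2 a b c i ∧ (i : ℕ) < LL k2)) := by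
  rw [IsTop, isArc_iff]
  constructor
  · intro ⟨h1, h2⟩
    rcases h1 with h | h
    · exact Or.inl h
    · refine Or.inr ⟨h, ?_⟩
      by_contra hlt
      have hLLlt : LL k2 < mm k2 a b c := by simp only [mm, nn, LL]; omega
      have hne := bl_ne_LL h
      refine h2 ⟨LL k2, hLLlt⟩ ?_
      rw [nests_iff]
      simp only [Fin.val_mk]
      exact ⟨trivial, h, by omega⟩
  · intro h
    constructor
    · tauto
    · intro j hj
      rw [nests_iff] at hj
      rcases h with h | h
      · exact (bl_ne_LL hj.2.1) (by omega)
      · omega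

lemma freeEndOutside_false (p : Fin (2 * nn k2 a b c)) :
    ¬ FreeEndOutside (FF k2 a b c) p := by
  rw [FreeEndOutside, isFree_iff]
  rintro ⟨h1, h2⟩
  have hLLlt : LL k2 < mm k2 a b c := by simp only [mm, nn, LL]; omega
  have hp := p.2
  refine h2 ⟨LL k2, hLLlt⟩ ?_
  rw [covers_iff]
  simp only [Fin.val_mk]
  refine ⟨trivial, ?_, ?_⟩ <;> (simp only [mm, nn, LL, q1, q2] at *; omega)

lemma noncrossing : Noncrossing (FF k2 a b c) := by
  rintro ⟨i, j, h1, h2, h3⟩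
  rw [Fin.lt_def] at h1 h2 h3
  rw [FF_apply] at h2 h3
  rw [FF_apply] at h3
  have hsi := fn_spec (k2 := k2) (a := a) (b := b) (c := c) (x := i.1) i.2
  have hsj := fn_spec (k2 := k2) (a := a) (b := b) (c := c) (x := j.1) j.2
  have hi := i.2; have hj := j.2
  rcases hsi with h'|h'|h'|h'|h' <;> rcases hsj with h''|h''|h''|h''|h'' <;>
    simp only [Bl, Br, mm, nn, LL, q1, q2] at * <;> omega

/-! ### counting -/

lemma card_zero' {M : ℕ} (P : Fin M → Prop) (h : ∀ x, ¬ P x) :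
    Nat.card {x // P x} = 0 := by
  have : IsEmpty {x // P x} := ⟨fun x => h x.1 x.2⟩
  exact Nat.card_of_isEmpty

lemma card_pair' {M : ℕ} (P : Fin M → Prop) (u v : Fin M) (huv : u ≠ v)
    (h : ∀ x, P x ↔ (x = u ∨ x = v)) : Nat.card {x // P x} = 2 := by
  have e : {x // P x} ≃ ({u, v} : Set (Fin M)) :=
    Equiv.subtypeEquivRight (fun x => by simpa [Set.mem_insert_iff] using h x)
  rw [Nat.card_congr e, Nat.card_coe_set_eq, Set.ncard_pair huv]

lemma LL_lt : LL k2 < mm k2 a b c := by simp only [mm, nn, LL]; omega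

/-- the long arc, as an element of `Fin (2 * nn)` -/
def eL (k2 a b c : ℕ) : Fin (2 * nn k2 a b c) := ⟨LL k2, LL_lt⟩

lemma q1_ne_q2 : q1 k2 a ≠ q2 k2 a b := by simp only [q1, q2]; omega
lemma q1_lt : q1 k2 a < mm k2 a b c := by simp only [mm, nn, q1]; omega
lemma q2_lt : q2 k2 a b < mm k2 a b c := by simp only [mm, nn, q2]; omega

lemma card_freeEndUnder_eL :
    Nat.card {p // FreeEndUnder (FF k2 a b c) (eL k2 a b c) p} = 2 := by
  refine card_pair' _ ⟨q1 k2 a, q1_lt⟩ ⟨q2 k2 a b, q2_lt⟩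
    (by simp [Fin.ext_iff, q1_ne_q2]) (fun x => ?_)
  rw [freeEndUnder_iff]
  simp [Fin.ext_iff, eL]

lemma card_free :
    Nat.card {p // (FF k2 a b c) p = p} = 2 := by
  refine card_pair' _ ⟨q1 k2 a, q1_lt⟩ ⟨q2 k2 a b, q2_lt⟩
    (by simp [Fin.ext_iff, q1_ne_q2]) (fun x => ?_)
  have := isFree_iff (k2 := k2) (a := a) (b := b) (c := c) x
  rw [IsFree] at this
  rw [this]
  simp [Fin.ext_iff]

/-- position of the `t`-th inside bigon left end -/
def posf (k2 a b : ℕ) (t : ℕ) : ℕ :=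
  if t < a then LL k2 + 1 + 2*t
  else if t < a + b then q1 k2 a + 1 + 2*(t-a)
  else q2 k2 a b + 1 + 2*(t-a-b)

lemma mm_pos : 0 < mm k2 a b c := by simp only [mm, nn]; omega

lemma card_children_eL :
    Nat.card {j // DirectChild (FF k2 a b c) (eL k2 a b c) j} = a + b + c := by
  classical
  rw [Nat.card_eq_fintype_card, Fintype.card_subtype]
  have hfilter : Finset.univ.filter (fun j => DirectChild (FF k2 a b c) (eL k2 a b c) j)
      = Finset.univ.filter (fun j : Fin (2 * nn k2 a b c) =>
          LL k2 < (j : ℕ) ∧ Bl k2 a b c (j : ℕ)) := by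
    ext j
    simp only [Finset.mem_filter, Finset.mem_univ, true_and, directChild_iff, eL, Fin.val_mk]
    tauto
  rw [hfilter, ← Finset.card_range (a+b+c)]
  refine Finset.card_nbij' (i := fun j : Fin (2 * nn k2 a b c) =>
      if (j : ℕ) < q1 k2 a then ((j : ℕ) - LL k2 - 1)/2
      else if (j : ℕ) < q2 k2 a b then a + ((j : ℕ) - q1 k2 a - 1)/2
      else a + b + ((j : ℕ) - q2 k2 a b - 1)/2)
    (j := fun t => ⟨posf k2 a b t % mm k2 a b c, Nat.mod_lt _ mm_pos⟩) ?_ ?_ ?_ ?_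
  · intro x hx
    simp only [Finset.mem_coe, Finset.mem_filter, Finset.mem_univ, true_and] at hx
    simp only [Finset.mem_coe, Finset.mem_range]
    split_ifs <;> simp only [Bl, mm, nn, LL, q1, q2] at * <;> omega
  · intro t ht
    simp only [Finset.mem_coe, Finset.mem_range] at ht
    have hlt : posf k2 a b t < mm k2 a b c := by
      simp only [posf, mm, nn, LL, q1, q2]; split_ifs <;> omega
    simp only [Finset.mem_coe, Finset.mem_filter, Finset.mem_univ, true_and, Fin.val_mk,
      Nat.mod_eq_of_lt hlt]
    simp only [posf, Bl, mm, nn, LL, q1, q2] at *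
    split_ifs <;> omega
  · intro x hx
    simp only [Finset.mem_coe, Finset.mem_filter, Finset.mem_univ, true_and] at hx
    have hlt : ∀ s, posf k2 a b s < mm k2 a b c ∨ True := fun _ => Or.inr trivial
    refine Fin.ext ?_
    have hb : (x : ℕ) < mm k2 a b c := x.2
    simp only [Fin.val_mk]
    have : ∀ s < mm k2 a b c, s % mm k2 a b c = s := fun s hs => Nat.mod_eq_of_lt hs
    simp only [posf]
    split_ifs <;> simp only [Bl, mm, nn, LL, q1, q2] at * <;> rw [this] <;> omega
  · intro t ht
    simp only [Finset.mem_coe, Finset.mem_range] at ht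
    have hlt : posf k2 a b t < mm k2 a b c := by
      simp only [posf, mm, nn, LL, q1, q2]; split_ifs <;> omega
    simp only [Fin.val_mk, Nat.mod_eq_of_lt hlt]
    simp only [posf, mm, nn, LL, q1, q2] at *
    split_ifs <;> omega

lemma card_isTop :
    Nat.card {i // IsTop (FF k2 a b c) i} = k2 + 2 := by
  classical
  rw [Nat.card_eq_fintype_card, Fintype.card_subtype]
  have hfilter : Finset.univ.filter (fun i => IsTop (FF k2 a b c) i)
      = Finset.univ.filter (fun i : Fin (2 * nn k2 a b c) =>
          (i : ℕ) ≤ LL k2 ∧ (i : ℕ) % 2 = 0) := by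
    ext i
    simp only [Finset.mem_filter, Finset.mem_univ, true_and, isTop_iff]
    simp only [Bl, mm, nn, LL, q1, q2]
    omega
  rw [hfilter, ← Finset.card_range (k2+2)]
  refine Finset.card_nbij' (i := fun j : Fin (2 * nn k2 a b c) => (j : ℕ)/2)
    (j := fun t => ⟨(2*t) % mm k2 a b c, Nat.mod_lt _ mm_pos⟩) ?_ ?_ ?_ ?_
  · intro x hx
    simp only [Finset.mem_coe, Finset.mem_filter, Finset.mem_univ, true_and] at hx
    simp only [Finset.mem_coe, Finset.mem_range, LL] at *
    omega
  · intro t ht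
    simp only [Finset.mem_coe, Finset.mem_range] at ht
    have hlt : 2*t < mm k2 a b c := by simp only [mm, nn, LL] at *; omega
    simp only [Finset.mem_coe, Finset.mem_filter, Finset.mem_univ, true_and, Fin.val_mk,
      Nat.mod_eq_of_lt hlt]
    simp only [mm, nn, LL] at *
    omega
  · intro x hx
    simp only [Finset.mem_coe, Finset.mem_filter, Finset.mem_univ, true_and] at hx
    refine Fin.ext ?_
    have hb : (x : ℕ) < mm k2 a b c := x.2
    have hlt : 2*((x:ℕ)/2) < mm k2 a b c := by omega
    simp only [Fin.val_mk, Nat.mod_eq_of_lt hlt]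
    omega
  · intro t ht
    simp only [Finset.mem_coe, Finset.mem_range] at ht
    have hlt : 2*t < mm k2 a b c := by simp only [mm, nn, LL] at *; omega
    simp only [Fin.val_mk, Nat.mod_eq_of_lt hlt]
    omega

lemma arcOrder_eL : arcOrder (FF k2 a b c) (eL k2 a b c) = (a + b + c + 1 : ℤ) := by
  rw [arcOrder, card_children_eL, card_freeEndUnder_eL]
  push_cast
  ring

lemma arcOrder_bigon (i : Fin (2 * nn k2 a b c)) (h : Bl k2 a b c (i : ℕ)) :
    arcOrder (FF k2 a b c) i = -1 := by
  rw [arcOrder]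
  rw [card_zero' _ (fun j hj => by
    rw [directChild_iff] at hj
    exact bl_ne_LL h hj.1)]
  rw [card_zero' _ (fun p hp => by
    rw [freeEndUnder_iff] at hp
    exact bl_ne_LL h hp.1)]
  rfl

lemma outerOrder_FF : outerOrder (FF k2 a b c) = (k2 : ℤ) := by
  rw [outerOrder, card_isTop, card_zero' _ (fun p hp => freeEndOutside_false p hp)]
  push_cast
  ring

lemma invol_lefts_card {M : ℕ} (f : Equiv.Perm (Fin M)) (hf : ∀ i, f (f i) = i) :
    M = 2 * (Finset.univ.filter fun i => i < f i).card
        + (Finset.univ.filter fun i => f i = i).card := by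
  classical
  have hAB : (Finset.univ.filter fun i => i < f i).card
      = (Finset.univ.filter fun i => f i < i).card := by
    refine Finset.card_nbij (i := fun i => f i) ?_ ?_ ?_
    · intro x hx
      simp only [Finset.mem_coe, Finset.mem_filter, Finset.mem_univ, true_and] at *
      rw [hf x]
      exact hx
    · intro x hx y hy hxy
      exact f.injective hxy
    · intro y hy
      simp only [Finset.coe_filter, Finset.mem_univ, true_and, Set.mem_image,
        Set.mem_setOf_eq] at *
      exact ⟨f y, by rw [hf y]; exact hy, hf y⟩
  have hsplit := Finset.card_filter_add_card_filter_not
    (s := (Finset.univ : Finset (Fin M))) (p := fun i => i < f i)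
  have hneg : (Finset.univ.filter fun i => ¬ (i < f i)).card
      = (Finset.univ.filter fun i => f i < i).card
        + (Finset.univ.filter fun i => f i = i).card := by
    rw [← Finset.card_union_of_disjoint]
    · congr 1
      ext x
      simp only [Finset.mem_filter, Finset.mem_univ, true_and, Finset.mem_union]
      constructor
      · intro hx
        rcases lt_or_eq_of_le (not_lt.mp hx) with h | h
        · exact Or.inl h
        · exact Or.inr h
      · intro hx
        rcases hx with h | h
        · exact not_lt.mpr h.le
        · exact not_lt.mpr h.le
    · refine Finset.disjoint_left.mpr ?_
      intro x hx hx'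
      simp only [Finset.mem_filter, Finset.mem_univ, true_and] at *
      rw [hx'] at hx
      exact lt_irrefl _ hx
  have hcard : (Finset.univ : Finset (Fin M)).card = M := Finset.card_univ.trans (Fintype.card_fin M)
  omega

lemma filter_isArc_FF :
    Finset.univ.filter (fun i => i < (FF k2 a b c) i)
      = insert (eL k2 a b c)
          (Finset.univ.filter fun i : Fin (2 * nn k2 a b c) => Bl k2 a b c (i : ℕ)) := by
  ext i
  simp only [Finset.mem_filter, Finset.mem_univ, true_and, Finset.mem_insert]
  have := isArc_iff (k2 := k2) (a := a) (b := b) (c := c) i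
  rw [IsArc] at this
  rw [this]
  constructor
  · rintro (h | h)
    · exact Or.inl (Fin.ext h)
    · exact Or.inr h
  · rintro (h | h)
    · exact Or.inl (by rw [h]; rfl)
    · exact Or.inr h

lemma card_Bl_filter :
    (Finset.univ.filter fun i : Fin (2 * nn k2 a b c) => Bl k2 a b c (i : ℕ)).card
      = k2 + a + b + c + 1 := by
  classical
  have h1 := invol_lefts_card (FF k2 a b c) (FF_invol)
  have h2 : (Finset.univ.filter fun i => (FF k2 a b c) i = i).card = 2 := by
    have := card_free (k2 := k2) (a := a) (b := b) (c := c)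
    rwa [Nat.card_eq_fintype_card, Fintype.card_subtype] at this
  rw [filter_isArc_FF] at h1
  have hnotmem : (eL k2 a b c) ∉
      (Finset.univ.filter fun i : Fin (2 * nn k2 a b c) => Bl k2 a b c (i : ℕ)) := by
    simp only [Finset.mem_filter, Finset.mem_univ, true_and]
    intro h
    exact bl_ne_LL h rfl
  rw [Finset.card_insert_of_notMem hnotmem] at h1
  simp only [mm, nn] at *
  omega

lemma faceOrders_FF :
    faceOrders (FF k2 a b c)
      = (k2 : ℤ) ::ₘ (a + b + c + 1 : ℤ) ::ₘ
          Multiset.replicate (k2 + a + b + c + 1) (-1 : ℤ) := by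
  classical
  rw [faceOrders, outerOrder_FF, arcOrders, filter_isArc_FF]
  have hnotmem : (eL k2 a b c) ∉
      (Finset.univ.filter fun i : Fin (2 * nn k2 a b c) => Bl k2 a b c (i : ℕ)) := by
    simp only [Finset.mem_filter, Finset.mem_univ, true_and]
    intro h
    exact bl_ne_LL h rfl
  rw [Finset.insert_val_of_notMem hnotmem, Multiset.map_cons, arcOrder_eL]
  congr 1
  congr 1
  have : ((Finset.univ.filter fun i : Fin (2 * nn k2 a b c) =>
      Bl k2 a b c (i : ℕ)).val).map (arcOrder (FF k2 a b c))
      = ((Finset.univ.filter fun i : Fin (2 * nn k2 a b c) =>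
      Bl k2 a b c (i : ℕ)).val).map (fun _ => (-1 : ℤ)) := by
    refine Multiset.map_congr rfl ?_
    intro x hx
    rw [Finset.mem_val, Finset.mem_filter] at hx
    exact arcOrder_bigon x hx.2
  rw [this, Multiset.map_const', Finset.card_val, card_Bl_filter]

/-! ### connectivity -/

/-- evaluation lemmas for `fn` -/
lemma fn_LL : fn k2 a b c (LL k2) = mm k2 a b c - 1 := by
  unfold fn; split_ifs <;> simp_all [mm, nn, LL, q1, q2] <;> omega
lemma fn_last : fn k2 a b c (mm k2 a b c - 1) = LL k2 := by
  unfold fn; split_ifs <;> simp_all [mm, nn, LL, q1, q2] <;> omega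
lemma fn_left_even {v : ℕ} (h : v < LL k2) (h2 : v % 2 = 0) : fn k2 a b c v = v + 1 := by
  unfold fn; split_ifs <;> simp_all [mm, nn, LL, q1, q2] <;> omega
lemma fn_left_odd {v : ℕ} (h : v < LL k2) (h2 : v % 2 = 1) : fn k2 a b c v = v - 1 := by
  unfold fn; split_ifs <;> simp_all [mm, nn, LL, q1, q2] <;> omega
lemma fn_b1_odd {v : ℕ} (h : LL k2 < v) (h1 : v < q1 k2 a) (h2 : v % 2 = 1) :
    fn k2 a b c v = v + 1 := by
  unfold fn; split_ifs <;> simp_all [mm, nn, LL, q1, q2] <;> omega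
lemma fn_b1_even {v : ℕ} (h : LL k2 < v) (h1 : v < q1 k2 a) (h2 : v % 2 = 0) :
    fn k2 a b c v = v - 1 := by
  unfold fn; split_ifs <;> simp_all [mm, nn, LL, q1, q2] <;> omega
lemma fn_b2_even {v : ℕ} (h : q1 k2 a < v) (h1 : v < q2 k2 a b) (h2 : v % 2 = 0) :
    fn k2 a b c v = v + 1 := by
  unfold fn; split_ifs <;> simp_all [mm, nn, LL, q1, q2] <;> omega
lemma fn_b2_odd {v : ℕ} (h : q1 k2 a < v) (h1 : v < q2 k2 a b) (h2 : v % 2 = 1) :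
    fn k2 a b c v = v - 1 := by
  unfold fn; split_ifs <;> simp_all [mm, nn, LL, q1, q2] <;> omega
lemma fn_b3_odd {v : ℕ} (h : q2 k2 a b < v) (h1 : v < mm k2 a b c - 1) (h2 : v % 2 = 1) :
    fn k2 a b c v = v + 1 := by
  unfold fn; split_ifs <;> simp_all [mm, nn, LL, q1, q2] <;> omega
lemma fn_b3_even {v : ℕ} (h : q2 k2 a b < v) (h1 : v < mm k2 a b c - 1) (h2 : v % 2 = 0) :
    fn k2 a b c v = v - 1 := by
  unfold fn; split_ifs <;> simp_all [mm, nn, LL, q1, q2] <;> omega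

/-- the adjacency relation of the meander graph -/
def rr (k2 a b c : ℕ) : Fin (2 * nn k2 a b c) → Fin (2 * nn k2 a b c) → Prop :=
  fun i j => ((FF k2 a b c) i = j ∧ i ≠ j) ∨
    crossingOf (nn k2 a b c) i = crossingOf (nn k2 a b c) j

lemma rr_symm : Symmetric (rr k2 a b c) := by
  intro i j h
  rcases h with ⟨h1, h2⟩ | h
  · exact Or.inl ⟨by rw [← h1, FF_invol], fun e => h2 e.symm⟩
  · exact Or.inr h.symm

def Root (k2 a b c : ℕ) : Fin (2 * nn k2 a b c) := ⟨0, mm_pos⟩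

def Reach' (k2 a b c v : ℕ) : Prop :=
  ∀ h : v < 2 * nn k2 a b c, Relation.ReflTransGen (rr k2 a b c) ⟨v, h⟩ (Root k2 a b c)

lemma reach_root : Reach' k2 a b c 0 := fun _ => Relation.ReflTransGen.refl

lemma cross_mirror {x y : Fin (2 * nn k2 a b c)}
    (h : (y : ℕ) = 2 * nn k2 a b c - 1 - (x : ℕ)) :
    crossingOf (nn k2 a b c) x = crossingOf (nn k2 a b c) y := by
  have hx := x.2; have hy := y.2
  unfold crossingOf
  split_ifs <;> omega

lemma reach_cross {v : ℕ} (hv : v < 2 * nn k2 a b c)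
    (h : Reach' k2 a b c (2 * nn k2 a b c - 1 - v)) : Reach' k2 a b c v := by
  intro hh
  refine Relation.ReflTransGen.head (Or.inr (cross_mirror (y := ⟨_, by omega⟩) rfl)) (h ?_)
  omega

lemma reach_arc {v : ℕ} (hv : v < 2 * nn k2 a b c) (hne : fn k2 a b c v ≠ v)
    (h : Reach' k2 a b c (fn k2 a b c v)) : Reach' k2 a b c v := by
  intro hh
  refine Relation.ReflTransGen.head (Or.inl ⟨rfl, ?_⟩) (h (fn_lt hv))
  simp only [ne_eq, Fin.ext_iff, Fin.val_mk, FF_apply]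
  omega

/-- reach of an arbitrary value by rewriting -/
lemma reach_eq {v w : ℕ} (h : v = w) (hr : Reach' k2 a b c w) : Reach' k2 a b c v := h ▸ hr

lemma reach_left (hck : c ≤ k2) : ∀ i, i ≤ c → Reach' k2 a b c (2*i) ∧ Reach' k2 a b c (2*i+1) := by
  intro i
  induction i with
  | zero =>
    intro _
    refine ⟨reach_eq (by omega) reach_root, ?_⟩
    refine reach_arc (by simp only [mm, nn] at *; omega) ?_ ?_ <;>
      rw [fn_left_odd (by simp only [LL]; omega) (by omega)]
    · omega
    · exact reach_root
  | succ i ih =>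
    intro hi
    obtain ⟨h0, h1⟩ := ih (by omega)
    -- block3 pair
    have hm : 2 * nn k2 a b c = mm k2 a b c := rfl
    have hb3e : Reach' k2 a b c (mm k2 a b c - 2 - 2*i) := by
      refine reach_cross (by simp only [mm, nn] at *; omega) ?_
      refine reach_eq (by simp only [mm, nn] at *; omega) h1
    have hb3o : Reach' k2 a b c (mm k2 a b c - 3 - 2*i) := by
      refine reach_arc (by simp only [mm, nn] at *; omega) ?_ ?_ <;>
        rw [fn_b3_odd (by simp only [mm, nn, q2, LL] at *; omega)
          (by simp only [mm, nn] at *; omega) (by simp only [mm, nn] at *; omega)]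
      · omega
      · exact reach_eq (by simp only [mm, nn] at *; omega) hb3e
    have he : Reach' k2 a b c (2*(i+1)) := by
      refine reach_cross (by simp only [mm, nn] at *; omega) ?_
      refine reach_eq (by simp only [mm, nn] at *; omega) hb3o
    refine ⟨he, ?_⟩
    refine reach_arc (by simp only [mm, nn] at *; omega) ?_ ?_ <;>
      rw [fn_left_odd (by simp only [LL] at *; omega) (by omega)]
    · omega
    · exact reach_eq (by omega) he

lemma reach_top : Reach' k2 a b c (mm k2 a b c - 1) := by
  refine reach_cross (by simp only [mm, nn]; omega) ?_
  exact reach_eq (by simp only [mm, nn]; omega) reach_root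

lemma reach_LL : Reach' k2 a b c (LL k2) := by
  refine reach_arc (by simp only [mm, nn, LL]; omega) ?_ ?_ <;> rw [fn_LL]
  · simp only [mm, nn, LL]; omega
  · exact reach_top

lemma reach_q2 (hck : c ≤ k2) : Reach' k2 a b c (q2 k2 a b) := by
  refine reach_cross (by simp only [mm, nn, q2]; omega) ?_
  refine reach_eq (by simp only [mm, nn, q2]; omega) (reach_left hck c le_rfl).2

lemma reach_block3 (hck : c ≤ k2) :
    ∀ v, q2 k2 a b < v → v < mm k2 a b c - 1 → Reach' k2 a b c v := by
  have heven : ∀ v, q2 k2 a b < v → v < mm k2 a b c - 1 → v % 2 = 0 → Reach' k2 a b c v := by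
    intro v h1 h2 h3
    set t := (mm k2 a b c - 2 - v)/2 with ht
    have h4 : t ≤ c := by simp only [mm, nn, q2] at *; omega
    refine reach_cross (by simp only [mm, nn] at *; omega) ?_
    refine reach_eq (show _ = 2*t+1 by simp only [mm, nn, q2] at *; omega) (reach_left hck t h4).2
  intro v h1 h2
  rcases Nat.even_or_odd v with hp | hp
  · exact heven v h1 h2 (Nat.even_iff.mp hp)
  · have hodd := Nat.odd_iff.mp hp
    refine reach_arc (by simp only [mm, nn] at *; omega) ?_ ?_ <;>
      rw [fn_b3_odd h1 h2 hodd]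
    · omega
    · exact heven (v+1) (by omega) (by simp only [mm, nn, q2] at *; omega) (by omega)

lemma reach_mid (hc : c = k2) (hab : a ≤ b) (hba : b ≤ a + 1) :
    ∀ t, t ≤ a → Reach' k2 a b c (LL k2 + 2*t) := by
  intro t
  induction t with
  | zero => intro _; exact reach_eq (by omega) reach_LL
  | succ t ih =>
    intro ht
    have h0 := ih (by omega)
    -- w = mm-1-LL-2t, odd, in block2
    have hw : Reach' k2 a b c (mm k2 a b c - 1 - LL k2 - 2*t) := by
      refine reach_cross (by simp only [mm, nn, LL] at *; omega) ?_
      exact reach_eq (by simp only [mm, nn, LL] at *; omega) h0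
    have hw1 : Reach' k2 a b c (mm k2 a b c - 2 - LL k2 - 2*t) := by
      refine reach_arc (by simp only [mm, nn, LL] at *; omega) ?_ ?_ <;>
        rw [fn_b2_even (by simp only [mm, nn, LL, q1] at *; omega)
          (by simp only [mm, nn, LL, q2] at *; omega)
          (by simp only [mm, nn, LL] at *; omega)]
      · simp only [mm, nn, LL] at *; omega
      · exact reach_eq (by simp only [mm, nn, LL] at *; omega) hw
    have ho : Reach' k2 a b c (LL k2 + 2*t + 1) := by
      refine reach_cross (by simp only [mm, nn, LL] at *; omega) ?_
      exact reach_eq (by simp only [mm, nn, LL] at *; omega) hw1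
    refine reach_arc (by simp only [mm, nn, LL] at *; omega) ?_ ?_ <;>
      rw [fn_b1_even (by omega) (by simp only [LL, q1] at *; omega) (by simp only [LL]; omega)]
    · omega
    · exact reach_eq (by omega) ho

def GoodParams (k2 a b c : ℕ) : Prop :=
  (c = k2 ∧ a ≤ b ∧ b ≤ a + 1) ∨ (a = 0 ∧ b = 0 ∧ k2 = c + 1)

lemma reach_all (hgood : GoodParams k2 a b c) :
    ∀ v, v < 2 * nn k2 a b c → Reach' k2 a b c v := by
  have hck : c ≤ k2 := by rcases hgood with ⟨h, _⟩ | ⟨_, _, h⟩ <;> omega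
  -- reach of small values (≤ 2c+1)
  have hsmall : ∀ v, v ≤ 2*c+1 → Reach' k2 a b c v := by
    intro v hv
    obtain ⟨hA, hB⟩ := reach_left hck (v/2) (by omega)
    rcases Nat.even_or_odd v with hp | hp
    · have := Nat.even_iff.mp hp
      exact reach_eq (by omega) hA
    · have := Nat.odd_iff.mp hp
      exact reach_eq (by omega) hB
  intro v hv
  have hm : 2 * nn k2 a b c = mm k2 a b c := rfl
  rcases hgood with ⟨hc, hab, hba⟩ | ⟨ha, hb, hk⟩
  · -- main case : c = k2
    -- left-middle evens / odds
    have hlmid : ∀ w, LL k2 ≤ w → w < q1 k2 a → Reach' k2 a b c w := by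
      have heven : ∀ w, LL k2 ≤ w → w < q1 k2 a → w % 2 = 0 → Reach' k2 a b c w := by
        intro w h1 h2 h3
        refine reach_eq (show w = LL k2 + 2*((w - LL k2)/2) by simp only [LL] at *; omega) ?_
        exact reach_mid hc hab hba _ (by simp only [LL, q1] at *; omega)
      intro w h1 h2
      rcases Nat.even_or_odd w with hp | hp
      · exact heven w h1 h2 (Nat.even_iff.mp hp)
      · have ho := Nat.odd_iff.mp hp
        refine reach_arc (by simp only [mm, nn, q1] at *; omega) ?_ ?_ <;>
          rw [fn_b1_odd (by simp only [LL] at *; omega) h2 ho]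
        · omega
        · exact heven (w+1) (by omega) (by simp only [LL, q1] at *; omega) (by omega)
    -- block2 odds and evens
    have hb2odd : ∀ w, q1 k2 a < w → w < q2 k2 a b → w % 2 = 1 → Reach' k2 a b c w := by
      intro w h1 h2 h3
      refine reach_cross (by simp only [mm, nn, q2] at *; omega) ?_
      refine reach_eq (show _ = LL k2 + 2*((mm k2 a b c - 1 - w - LL k2)/2) by
        simp only [mm, nn, LL, q1, q2] at *; omega) ?_
      exact reach_mid hc hab hba _ (by simp only [mm, nn, LL, q1, q2] at *; omega)
    have hb2 : ∀ w, q1 k2 a < w → w < q2 k2 a b → Reach' k2 a b c w := by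
      intro w h1 h2
      rcases Nat.even_or_odd w with hp | hp
      · have he := Nat.even_iff.mp hp
        refine reach_arc (by simp only [mm, nn, q2] at *; omega) ?_ ?_ <;>
          rw [fn_b2_even h1 h2 he]
        · omega
        · exact hb2odd (w+1) (by omega) (by simp only [q1, q2] at *; omega) (by omega)
      · exact hb2odd w h1 h2 (Nat.odd_iff.mp hp)
    -- q1 itself
    have hq1 : Reach' k2 a b c (q1 k2 a) := by
      rcases Nat.lt_or_ge a b with hba2 | hba2
      · -- b = a+1 : partner is q1+1
        refine reach_cross (by simp only [mm, nn, q1] at *; omega) ?_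
        refine reach_eq (show _ = q1 k2 a + 1 by simp only [mm, nn, q1] at *; omega) ?_
        exact hb2 _ (by omega) (by simp only [q1, q2] at *; omega)
      · -- b = a : partner is q1 - 1 = LL + 2a
        refine reach_cross (by simp only [mm, nn, q1] at *; omega) ?_
        refine reach_eq (show _ = LL k2 + 2*a by simp only [mm, nn, LL, q1] at *; omega) ?_
        exact reach_mid hc hab hba a le_rfl
    -- assemble
    rcases Nat.lt_or_ge v (LL k2) with h | h
    · exact hsmall v (by simp only [LL] at *; omega)
    rcases Nat.lt_or_ge v (q1 k2 a) with h2 | h2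
    · exact hlmid v h h2
    rcases Nat.eq_or_lt_of_le h2 with h3 | h3
    · exact reach_eq h3.symm hq1
    rcases Nat.lt_or_ge v (q2 k2 a b) with h4 | h4
    · exact hb2 v h3 h4
    rcases Nat.eq_or_lt_of_le h4 with h5 | h5
    · exact reach_eq h5.symm (reach_q2 hck)
    rcases Nat.lt_or_ge v (mm k2 a b c - 1) with h6 | h6
    · exact reach_block3 hck v h5 h6
    · exact reach_eq (show v = mm k2 a b c - 1 by simp only [mm, nn] at *; omega) reach_top
  · -- degenerate case : a = 0, b = 0, k2 = c+1
    have h23 : Reach' k2 a b c (2*c+3) := by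
      refine reach_cross (by simp only [mm, nn] at *; omega) ?_
      exact reach_eq (show _ = LL k2 by simp only [mm, nn, LL] at *; omega) reach_LL
    have h22 : Reach' k2 a b c (2*c+2) := by
      refine reach_arc (by simp only [mm, nn] at *; omega) ?_ ?_ <;>
        rw [fn_left_even (by simp only [LL] at *; omega) (by omega)]
      · omega
      · exact reach_eq (by omega) h23
    have hq1 : Reach' k2 a b c (q1 k2 a) := by
      refine reach_cross (by simp only [mm, nn, q1] at *; omega) ?_
      exact reach_eq (show _ = 2*c+2 by simp only [mm, nn, q1] at *; omega) h22
    rcases Nat.lt_or_ge v (LL k2) with h | h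
    · rcases Nat.lt_or_ge v (2*c+2) with hh | hh
      · exact hsmall v (by omega)
      · rcases Nat.eq_or_lt_of_le hh with h3 | h3
        · exact reach_eq h3.symm h22
        · exact reach_eq (show v = 2*c+3 by simp only [LL] at *; omega) h23
    rcases Nat.eq_or_lt_of_le h with h3 | h3
    · exact reach_eq h3.symm reach_LL
    rcases Nat.eq_or_lt_of_le (show q1 k2 a ≤ v by simp only [LL, q1] at *; omega) with h4 | h4
    · exact reach_eq h4.symm hq1
    rcases Nat.eq_or_lt_of_le (show q2 k2 a b ≤ v by simp only [q1, q2] at *; omega) with h5 | h5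
    · exact reach_eq h5.symm (reach_q2 hck)
    rcases Nat.lt_or_ge v (mm k2 a b c - 1) with h6 | h6
    · exact reach_block3 hck v h5 h6
    · exact reach_eq (show v = mm k2 a b c - 1 by simp only [mm, nn] at *; omega) reach_top

lemma single_arc_FF (hgood : GoodParams k2 a b c) :
    ∀ i j : Fin (2 * nn k2 a b c),
      Relation.ReflTransGen
        (fun x y => ((FF k2 a b c) x = y ∧ x ≠ y) ∨
          crossingOf (nn k2 a b c) x = crossingOf (nn k2 a b c) y) i j := by
  intro i j
  letI : Std.Symm (rr k2 a b c) := ⟨fun x y h => rr_symm h⟩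
  have hsym : ∀ {x y}, Relation.ReflTransGen (rr k2 a b c) x y →
      Relation.ReflTransGen (rr k2 a b c) y x := fun h => Std.Symm.symm _ _ h
  have h1 : Relation.ReflTransGen (rr k2 a b c) i (Root k2 a b c) := by
    have := reach_all hgood i.1 i.2 i.2
    exact this
  have h2 : Relation.ReflTransGen (rr k2 a b c) j (Root k2 a b c) := by
    have := reach_all hgood j.1 j.2 j.2
    exact this
  exact h1.trans (hsym h2)

/-- the generic meander -/
def Mgen (k2 a b c : ℕ) (hgood : GoodParams k2 a b c) : DoublyAnchoredOpenSemiMeander where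
  n := nn k2 a b c
  arcs := FF k2 a b c
  arcs_invol := FF_invol
  arcs_noncrossing := noncrossing
  two_free_ends := card_free
  single_arc := single_arc_FF hgood

lemma Mgen_crossings (hgood : GoodParams k2 a b c) :
    (Mgen k2 a b c hgood).crossings = k2 + a + b + c + 3 := rfl

lemma Mgen_orders (hgood : GoodParams k2 a b c) :
    (Mgen k2 a b c hgood).orders
      = ((a + b + c + 1 : ℕ) : ℤ) ::ₘ (k2 : ℤ) ::ₘ
          Multiset.replicate (k2 + (a + b + c + 1) + 4) (-1 : ℤ) := by
  show faceOrders (FF k2 a b c) + Multiset.replicate 4 (-1) = _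
  rw [faceOrders_FF, Multiset.cons_add, Multiset.cons_add, ← Multiset.replicate_add,
    Multiset.cons_swap]
  have hcount : k2 + (a + b + c + 1) + 4 = k2 + a + b + c + 1 + 4 := by omega
  rw [hcount]
  push_cast
  rfl

end Con

section LowerBound

lemma card_eq_filter_ne_add_count (s : Multiset ℤ) :
    Multiset.card s = Multiset.card (s.filter (· ≠ 0)) + s.count 0 := by
  classical
  conv_lhs => rw [← Multiset.filter_add_not (fun x => x ≠ (0:ℤ)) s]
  rw [Multiset.card_add]
  congr 1
  rw [Multiset.count_eq_card_filter_eq]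
  congr 1
  refine Multiset.filter_congr ?_
  intro x _
  constructor
  · intro h; omega
  · intro h; omega

lemma filter_ne_replicate_neg_one (n : ℕ) :
    (Multiset.replicate n (-1 : ℤ)).filter (· ≠ 0) = Multiset.replicate n (-1 : ℤ) := by
  refine Multiset.filter_eq_self.mpr ?_
  intro x hx
  have := Multiset.eq_of_mem_replicate hx
  omega

lemma count_zero_replicate_neg_one (n : ℕ) :
    (Multiset.replicate n (-1 : ℤ)).count 0 = 0 := by
  rw [Multiset.count_replicate]
  norm_num

lemma crossings_lower_bound (k1 k2 : ℕ) (M : DoublyAnchoredOpenSemiMeander)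
    (hstr : M.InStratum ((k1 : ℤ) ::ₘ (k2 : ℤ) ::ₘ Multiset.replicate (k1 + k2 + 4) (-1 : ℤ))) :
    k1 + k2 + 2 ≤ M.crossings := by
  classical
  obtain ⟨h1, h2⟩ := hstr
  -- the number of faces is the number of crossings
  have hfree : (Finset.univ.filter fun p => M.arcs p = p).card = 2 := by
    have := M.two_free_ends
    rwa [Nat.card_eq_fintype_card, Fintype.card_subtype] at this
  have hlef := Con.invol_lefts_card M.arcs M.arcs_invol
  have hfcard : Multiset.card (faceOrders M.arcs) = M.n := by
    rw [faceOrders, Multiset.card_cons, arcOrders, Multiset.card_map]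
    have hval : Multiset.card (Finset.univ.filter fun i => i < M.arcs i).val
        = (Finset.univ.filter fun i : Fin (2 * M.n) => i < M.arcs i).card := rfl
    omega
  set F := faceOrders M.arcs with hF
  -- cardinalities of the nonzero parts
  have hOfil : (M.orders).filter (· ≠ 0) = F.filter (· ≠ 0) + Multiset.replicate 4 (-1 : ℤ) := by
    rw [DoublyAnchoredOpenSemiMeander.orders, Multiset.filter_add,
      filter_ne_replicate_neg_one]
  have hOcount : (M.orders).count 0 = F.count 0 := by
    rw [DoublyAnchoredOpenSemiMeander.orders, Multiset.count_add,
      count_zero_replicate_neg_one, ← hF]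
    omega
  -- card of K's nonzero part
  have hKfil : Multiset.card
      (((k1 : ℤ) ::ₘ (k2 : ℤ) ::ₘ Multiset.replicate (k1 + k2 + 4) (-1 : ℤ)).filter (· ≠ 0))
      = (if k1 = 0 then 0 else 1) + (if k2 = 0 then 0 else 1) + (k1 + k2 + 4) := by
    by_cases e1 : k1 = 0 <;> by_cases e2 : k2 = 0
    · rw [if_pos e1, if_pos e2, Multiset.filter_cons_of_neg _ (by push_cast; omega),
        Multiset.filter_cons_of_neg _ (by push_cast; omega), filter_ne_replicate_neg_one,
        Multiset.card_replicate]
      omega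
    · rw [if_pos e1, if_neg e2, Multiset.filter_cons_of_neg _ (by push_cast; omega),
        Multiset.filter_cons_of_pos _ (by push_cast; omega), filter_ne_replicate_neg_one,
        Multiset.card_cons, Multiset.card_replicate]
      omega
    · rw [if_neg e1, if_pos e2, Multiset.filter_cons_of_pos _ (by push_cast; omega),
        Multiset.filter_cons_of_neg _ (by push_cast; omega), filter_ne_replicate_neg_one,
        Multiset.card_cons, Multiset.card_replicate]
      omega
    · rw [if_neg e1, if_neg e2, Multiset.filter_cons_of_pos _ (by push_cast; omega),
        Multiset.filter_cons_of_pos _ (by push_cast; omega), filter_ne_replicate_neg_one,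
        Multiset.card_cons, Multiset.card_cons, Multiset.card_replicate]
      omega
  have hKcount : (((k1 : ℤ) ::ₘ (k2 : ℤ) ::ₘ Multiset.replicate (k1 + k2 + 4) (-1 : ℤ))).count 0
      = (if k1 = 0 then 1 else 0) + (if k2 = 0 then 1 else 0) := by
    rw [Multiset.count_cons, Multiset.count_cons, count_zero_replicate_neg_one]
    split_ifs <;> omega
  -- combine
  have hcard1 : Multiset.card (F.filter (· ≠ 0)) + 4
      = (if k1 = 0 then 0 else 1) + (if k2 = 0 then 0 else 1) + (k1 + k2 + 4) := by
    have := congrArg Multiset.card h1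
    rw [hOfil, Multiset.card_add, Multiset.card_replicate, hKfil] at this
    omega
  have hcard2 : (if k1 = 0 then 1 else 0) + (if k2 = 0 then 1 else 0) ≤ F.count 0 := by
    rw [hOcount, hKcount] at h2
    exact h2
  have hdecomp := card_eq_filter_ne_add_count F
  rw [hfcard] at hdecomp
  show k1 + k2 + 2 ≤ M.n
  split_ifs at hcard1 hcard2 <;> omega

end LowerBound

section SmallCase

/-- the arcs of the 2-crossing meander for `Q(0,0,-1⁴)` -/
def f0 : Fin (2*2) → Fin (2*2) := fun x =>
  if x.1 = 0 then ⟨2, by omega⟩ else if x.1 = 2 then ⟨0, by omega⟩ else x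

lemma f0_invol : Function.Involutive f0 := by
  have : ∀ x, f0 (f0 x) = x := by decide
  exact this

def P0 : Equiv.Perm (Fin (2*2)) := Function.Involutive.toPerm f0 f0_invol

lemma card_one' {M : ℕ} (P : Fin M → Prop) (u : Fin M)
    (h : ∀ x, P x ↔ x = u) : Nat.card {x // P x} = 1 := by
  have e : {x // P x} ≃ ({u} : Set (Fin M)) :=
    Equiv.subtypeEquivRight (fun x => by simpa [Set.mem_singleton_iff] using h x)
  rw [Nat.card_congr e, Nat.card_coe_set_eq, Set.ncard_singleton]

def M0 : DoublyAnchoredOpenSemiMeander where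
  n := 2
  arcs := P0
  arcs_invol := by decide
  arcs_noncrossing := by unfold Noncrossing; decide
  two_free_ends := by
    rw [Nat.card_eq_fintype_card, Fintype.card_subtype]
    decide
  single_arc := by
    intro i j
    set r : Fin (2*2) → Fin (2*2) → Prop :=
      fun a b => (P0 a = b ∧ a ≠ b) ∨ crossingOf 2 a = crossingOf 2 b with hr
    have hsym : Symmetric r := by
      intro x y hxy
      rcases hxy with ⟨hh1, hh2⟩ | hh
      · refine Or.inl ⟨?_, fun e => hh2 e.symm⟩
        rw [← hh1]
        exact f0_invol x
      · exact Or.inr hh.symm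
    have reach : ∀ i : Fin (2*2), Relation.ReflTransGen r i ⟨0, by omega⟩ := by
      intro i
      have s20 : r ⟨2, by omega⟩ ⟨0, by omega⟩ := Or.inl (by decide)
      have s12 : r ⟨1, by omega⟩ ⟨2, by omega⟩ := Or.inr (by decide)
      have s30 : r ⟨3, by omega⟩ ⟨0, by omega⟩ := Or.inr (by decide)
      fin_cases i
      · exact Relation.ReflTransGen.refl
      · exact Relation.ReflTransGen.head s12 (Relation.ReflTransGen.head s20 .refl)
      · exact Relation.ReflTransGen.head s20 .refl
      · exact Relation.ReflTransGen.head s30 .refl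
    letI : Std.Symm r := ⟨fun x y h => hsym h⟩
    exact (reach i).trans (Std.Symm.symm _ _ (reach j))

lemma M0_orders :
    M0.orders = (0 : ℤ) ::ₘ (0 : ℤ) ::ₘ Multiset.replicate 4 (-1 : ℤ) := by
  have houter : outerOrder P0 = 0 := by
    rw [outerOrder]
    rw [card_one' _ ⟨0, by omega⟩ (by unfold IsTop Nests IsArc; decide)]
    rw [card_one' _ ⟨3, by omega⟩ (by unfold FreeEndOutside IsFree Covers IsArc; decide)]
    norm_num
  have harc : arcOrder P0 ⟨0, by omega⟩ = 0 := by
    rw [arcOrder]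
    rw [Con.card_zero' _ (by unfold DirectChild Nests IsArc; decide)]
    rw [card_one' _ ⟨1, by omega⟩ (by unfold FreeEndUnder IsFree Covers Nests IsArc; decide)]
    norm_num
  have hfil : Finset.univ.filter (fun i => i < P0 i) = {(⟨0, by omega⟩ : Fin (2*2))} := by
    decide
  show faceOrders P0 + Multiset.replicate 4 (-1) = _
  rw [faceOrders, houter, arcOrders, hfil]
  rw [Finset.singleton_val, Multiset.map_singleton, harc]
  rfl

end SmallCase

/-- **Proposition 4.5.**  For all integers `k₁ ≥ k₂ ≥ 0`, the minimum number of
crossings among all doubly-anchored open semi-meanders lying in the genus-zero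
stratum `Q(k₁, k₂, -1^{k₁+k₂+4})` is exactly `k₁ + k₂ + 2`. -/
theorem min_crossings_doublyAnchoredOpenSemiMeander (k₁ k₂ : ℕ) (h : k₂ ≤ k₁) :
    IsLeast {c : ℕ | ∃ M : DoublyAnchoredOpenSemiMeander,
        M.InStratum ((k₁ : ℤ) ::ₘ (k₂ : ℤ) ::ₘ Multiset.replicate (k₁ + k₂ + 4) (-1 : ℤ)) ∧
        M.crossings = c}
      (k₁ + k₂ + 2) := by
  constructor
  · -- a meander with k₁ + k₂ + 2 crossings in the stratum
    by_cases hk1 : k₁ = 0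
    · have hk2 : k₂ = 0 := by omega
      subst hk1; subst hk2
      refine ⟨M0, ?_, rfl⟩
      show MatchesStratum M0.orders _
      rw [M0_orders]
      norm_num
      exact ⟨rfl, le_rfl⟩
    · -- use the generic construction
      rcases Nat.eq_or_lt_of_le h with he | hlt
      · -- k₂ = k₁
        have hgood : Con.GoodParams k₁ 0 0 (k₁ - 1) := Or.inr ⟨rfl, rfl, by omega⟩
        refine ⟨Con.Mgen k₁ 0 0 (k₁ - 1) hgood, ?_, ?_⟩
        · show MatchesStratum _ _
          rw [Con.Mgen_orders]
          have e1 : 0 + 0 + (k₁ - 1) + 1 = k₁ := by omega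
          have e2 : k₁ + (0 + 0 + (k₁ - 1) + 1) + 4 = k₁ + k₂ + 4 := by omega
          rw [e2, e1, he]
          exact ⟨rfl, le_rfl⟩
        · rw [Con.Mgen_crossings]
          omega
      · -- k₂ < k₁
        set d := k₁ - k₂ with hd
        set aa := (d - 1) / 2 with haa
        set bb := (d - 1) - aa with hbb
        have hgood : Con.GoodParams k₂ aa bb k₂ := Or.inl ⟨rfl, by omega, by omega⟩
        refine ⟨Con.Mgen k₂ aa bb k₂ hgood, ?_, ?_⟩
        · show MatchesStratum _ _
          rw [Con.Mgen_orders]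
          have e1 : aa + bb + k₂ + 1 = k₁ := by omega
          have e2 : k₂ + (aa + bb + k₂ + 1) + 4 = k₁ + k₂ + 4 := by omega
          rw [e2, e1]
          exact ⟨rfl, le_rfl⟩
        · rw [Con.Mgen_crossings]
          omega
  · -- lower bound
    rintro x ⟨M, hM, rfl⟩
    exact crossings_lower_bound k₁ k₂ M hM

end PaperMeanders
end
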